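/- Let g : ℝ → ℝ be continuously differentiable with g'(u) > 0 for all u, lim_{u→−∞} g(u) = L₋ and lim_{u→+∞} g(u) = L₊, and let f : ℝ → ℝ be continuously differentiable with L₋ < f(0) < L₊. Then there exist δ > 0 and a₀ > 0 such that for every a with 0 < a < a₀ and every x with |x| < δ and f(x) = g(x/a), the Jacobian matrix [[−(1/a)·g'(x/a), 1], [−f'(x), 1]] of the system ẋ = y − g(x/a), ẏ = y − f(x) at the equilibrium (x, f(x)) has negative determinant f'(x) − (1/a)·g'(x/a) < 0, so the equilibrium is a saddle. -/

import Mathlib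

/-- Let `g` be C¹ with everywhere positive derivative and limits `Lm`, `Lp` at `∓∞`,
and `f` C¹ with `Lm < f 0 < Lp`.  Then there are `δ > 0` and `a₀ > 0` such that for
every `0 < a < a₀` and every `x` with `|x| < δ` and `f x = g (x/a)`, the Jacobian
matrix `[[−(1/a)·g'(x/a), 1], [−f'(x), 1]]` of the system `ẋ = y − g(x/a)`,
`ẏ = y − f(x)` at the equilibrium `(x, f x)` has negative determinant
`f'(x) − (1/a)·g'(x/a) < 0`, so the equilibrium is a saddle. -/
theorem equilibrium_is_saddle_attracting_sliding
    (g f : ℝ → ℝ) (Lm Lp : ℝ)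
    (hg_smooth : ContDiff ℝ 1 g) (hg' : ∀ u, 0 < deriv g u)
    (hg_bot : Filter.Tendsto g Filter.atBot (nhds Lm))
    (hg_top : Filter.Tendsto g Filter.atTop (nhds Lp))
    (hf_smooth : ContDiff ℝ 1 f)
    (h_lo : Lm < f 0) (h_hi : f 0 < Lp) :
    ∃ δ > 0, ∃ a₀ > 0, ∀ a, 0 < a → a < a₀ →
      ∀ x, |x| < δ → f x = g (x / a) →
        Matrix.det !![-((1 / a) * deriv g (x / a)), 1; -(deriv f x), 1]
            = deriv f x - (1 / a) * deriv g (x / a) ∧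
        Matrix.det !![-((1 / a) * deriv g (x / a)), 1; -(deriv f x), 1] < 0 := by
  -- g is strictly monotone
  have hgdiff : Differentiable ℝ g := hg_smooth.differentiable one_ne_zero
  have hgmono : StrictMono g := strictMono_of_deriv_pos hg'
  set c₁ : ℝ := (Lm + f 0) / 2 with hc₁
  set c₂ : ℝ := (f 0 + Lp) / 2 with hc₂
  have hLmc₁ : Lm < c₁ := by rw [hc₁]; linarith
  have hc₁f : c₁ < f 0 := by rw [hc₁]; linarith
  have hfc₂ : f 0 < c₂ := by rw [hc₂]; linarith
  have hc₂Lp : c₂ < Lp := by rw [hc₂]; linarith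
  -- find u₁ with g u₁ < c₁, u₂ with c₂ < g u₂
  obtain ⟨u₁, hu₁⟩ : ∃ u, g u < c₁ :=
    (hg_bot.eventually (eventually_lt_nhds hLmc₁)).exists
  obtain ⟨u₂, hu₂⟩ : ∃ u, c₂ < g u :=
    (hg_top.eventually (eventually_gt_nhds hc₂Lp)).exists
  have hu12 : u₁ < u₂ := hgmono.lt_iff_lt.mp (by linarith)
  -- δ from continuity of f at 0
  have hfc : ContinuousAt f 0 := (hf_smooth.continuous).continuousAt
  have hmem : Set.Ioo c₁ c₂ ∈ nhds (f 0) := isOpen_Ioo.mem_nhds ⟨hc₁f, hfc₂⟩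
  obtain ⟨δ, hδpos, hδ⟩ := Metric.mem_nhds_iff.mp (hfc hmem)
  -- min of deriv g on [u₁,u₂]
  have hgder : Continuous (deriv g) := hg_smooth.continuous_deriv le_rfl
  obtain ⟨um, humem, hum⟩ := (isCompact_Icc (a := u₁) (b := u₂)).exists_isMinOn
    (Set.nonempty_Icc.mpr hu12.le) hgder.continuousOn
  set m : ℝ := deriv g um with hm
  have hmpos : 0 < m := hg' um
  -- max of deriv f on [-δ, δ]
  have hfder : Continuous (deriv f) := hf_smooth.continuous_deriv le_rfl
  have hIcc : (-δ : ℝ) ≤ δ := by linarith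
  obtain ⟨xm, hxmem, hxm⟩ := (isCompact_Icc (a := (-δ) ) (b := δ)).exists_isMaxOn
    (Set.nonempty_Icc.mpr hIcc) hfder.continuousOn
  set M : ℝ := max (deriv f xm) 1 with hM
  have hMpos : (0 : ℝ) < M := lt_of_lt_of_le one_pos (le_max_right _ _)
  refine ⟨δ, hδpos, m / M, div_pos hmpos hMpos, ?_⟩
  intro a ha haM x hx hfx
  have hdet : Matrix.det !![-((1 / a) * deriv g (x / a)), 1; -(deriv f x), 1]
      = deriv f x - (1 / a) * deriv g (x / a) := by
    rw [Matrix.det_fin_two_of]; ring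
  refine ⟨hdet, ?_⟩
  rw [hdet]
  -- f x ∈ (c₁, c₂)
  have hxball : x ∈ Metric.ball (0:ℝ) δ := by
    simpa [Real.norm_eq_abs] using hx
  have hfxIoo : f x ∈ Set.Ioo c₁ c₂ := hδ hxball
  -- x/a ∈ [u₁, u₂]
  have hxu : x / a ∈ Set.Icc u₁ u₂ := by
    constructor
    · exact (hgmono.lt_iff_lt.mp (by rw [← hfx]; exact lt_trans hu₁ hfxIoo.1)).le
    · exact (hgmono.lt_iff_lt.mp (by rw [← hfx]; exact lt_trans hfxIoo.2 hu₂)).le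
  have hgx : m ≤ deriv g (x / a) := (isMinOn_iff.mp hum) _ hxu
  have hfx' : deriv f x ≤ M := by
    have : deriv f x ≤ deriv f xm := (isMaxOn_iff.mp hxm) x ⟨by cases abs_lt.mp hx; linarith,
      (abs_lt.mp hx).2.le⟩
    exact this.trans (le_max_left _ _)
  have hMa : M < m / a := by
    rw [lt_div_iff₀ ha]
    calc M * a < M * (m / M) := by
          exact (mul_lt_mul_iff_right₀ hMpos).mpr haM
      _ = m := by field_simp
  have : m / a ≤ (1 / a) * deriv g (x / a) := by
    rw [div_eq_inv_mul, ← one_div]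
    exact mul_le_mul_of_nonneg_left hgx (by positivity)
  linarith
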